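/- For N ≥ 3, the determinant of the N × N submatrix of C_N consisting of its first N rows equals 2 if N is even and −2 if N is odd, i.e., equals 2·(−1)^N. -/

import Mathlib

theorem stmt_5 (N : ℕ) (hN : 3 ≤ N) :
    Matrix.det (Matrix.of (fun (i j : Fin N) =>
      if i.1 + 1 < N then (if j.1 = 0 ∨ j.1 = i.1 + 1 then (1 : ℚ) else 0)
      else (if j.1 = 1 ∨ j.1 = 2 then (1 : ℚ) else 0))) = 2 * (-1)^N := by
  obtain ⟨n, rfl⟩ : ∃ n, N = n + 3 := ⟨N - 3, by omega⟩
  set A : Matrix (Fin (n+3)) (Fin (n+3)) ℚ := Matrix.of (fun (i j : Fin (n+3)) =>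
      if i.1 + 1 < n+3 then (if j.1 = 0 ∨ j.1 = i.1 + 1 then (1 : ℚ) else 0)
      else (if j.1 = 1 ∨ j.1 = 2 then (1 : ℚ) else 0)) with hA
  set l : Fin (n+3) := Fin.last (n+2) with hl
  have hl0 : l ≠ (0 : Fin (n+3)) := by simp [hl, Fin.ext_iff]
  have hl1 : l ≠ (1 : Fin (n+3)) := by simp [hl, Fin.ext_iff]
  set e0 : Fin (n+3) → ℚ := fun j => if j.1 = 0 then 1 else 0 with he0
  set M2 : Matrix (Fin (n+3)) (Fin (n+3)) ℚ := A.updateRow l e0 with hM2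
  -- Step 1: row operations on the last row
  have step1 : A.det = (A.updateRow l ((-2 : ℚ) • e0)).det := by
    have e1 : (A.updateRow l (A l + (-1:ℚ) • A 0)).det = A.det :=
      Matrix.det_updateRow_add_smul_self A hl0 (-1)
    set A1 := A.updateRow l (A l + (-1:ℚ) • A 0) with hA1
    have e2 : (A1.updateRow l (A1 l + (-1:ℚ) • A1 1)).det = A1.det :=
      Matrix.det_updateRow_add_smul_self A1 hl1 (-1)
    have e3 : A1.updateRow l (A1 l + (-1:ℚ) • A1 1) = A.updateRow l ((-2 : ℚ) • e0) := by
      ext i j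
      by_cases hi : i = l
      · subst hi
        rw [Matrix.updateRow_self, Matrix.updateRow_self]
        simp only [hA1, Matrix.updateRow_self, Matrix.updateRow_ne (Ne.symm hl1),
          Pi.add_apply, Pi.smul_apply, smul_eq_mul]
        simp only [hA, Matrix.of_apply, he0, hl, Fin.val_last, Fin.val_zero, Fin.val_one,
          Pi.smul_apply, smul_eq_mul]
        split_ifs <;> (first | (exfalso; omega) | norm_num) <;> simp only [Fin.ext_iff, Fin.val_zero] <;>
          split_ifs <;> (first | (exfalso; omega) | norm_num)
      · simp [hA1, Matrix.updateRow_ne hi]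
    rw [← e1, ← e2, e3]
  rw [step1, Matrix.det_updateRow_smul, ← hM2]
  -- Step 2: M2 is a column permutation of an upper triangular matrix
  set σ : Equiv.Perm (Fin (n+3)) := finRotate (n+3) with hσ
  set T : Matrix (Fin (n+3)) (Fin (n+3)) ℚ := Matrix.of
    (fun i j => if i = j then (1:ℚ) else if j = l ∧ i ≠ l then 1 else 0) with hT
  have key : M2.submatrix id σ = T := by
    ext i j
    have hval : (σ j).1 = if j = l then 0 else j.1 + 1 := by
      simp only [hσ, finRotate_succ_apply]
      rcases eq_or_ne j l with h | h
      · simp [h, hl]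
      · rw [if_neg h, Fin.val_add_one]
        rw [if_neg (by rwa [← hl])]
    by_cases hi : i = l
    · subst hi
      simp only [Matrix.submatrix_apply, id_eq, hM2, Matrix.updateRow_self, he0, hT,
        Matrix.of_apply]
      rcases eq_or_ne j l with h | h
      · subst h
        rw [if_pos rfl] at hval
        simp [hval]
      · rw [hval, if_neg h, if_neg (by omega), if_neg (Ne.symm h)]
        simp
    · have hi2 : i.1 ≠ n + 2 := by
        intro h; exact hi (by simp [hl, Fin.ext_iff, h])
      have hi' : i.1 + 1 < n + 3 := by have := i.isLt; omega
      simp only [Matrix.submatrix_apply, id_eq, hM2, Matrix.updateRow_ne hi, hA,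
        Matrix.of_apply, if_pos hi', hT]
      rcases eq_or_ne j l with h | h
      · subst h
        rw [hval, if_pos rfl, if_pos (Or.inl rfl), if_neg hi, if_pos ⟨rfl, hi⟩]
      · rw [hval, if_neg h]
        rcases eq_or_ne i j with hij | hij
        · subst hij
          simp
        · have hij' : i.1 ≠ j.1 := fun h => hij (Fin.ext h)
          rw [if_neg (by omega : ¬ (j.1 + 1 = 0 ∨ j.1 + 1 = i.1 + 1)), if_neg hij,
            if_neg (by tauto)]
  have hTtri : T.BlockTriangular id := by
    intro i j hij
    simp only [hT, Matrix.of_apply, id_eq] at hij ⊢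
    rw [if_neg (by rintro rfl; exact lt_irrefl _ hij),
      if_neg (by rintro ⟨rfl, -⟩; exact absurd (Fin.le_last i) (not_le.mpr hij))]
  have hTdet : T.det = 1 := by
    rw [Matrix.det_of_upperTriangular hTtri]
    simp [hT]
  have hperm : ((Equiv.Perm.sign σ : ℤ) : ℚ) * M2.det = 1 := by
    rw [← hTdet, ← key, Matrix.det_permute']
  have hsign : ((Equiv.Perm.sign σ : ℤ) : ℚ) = (-1)^(n+2) := by
    rw [hσ, sign_finRotate]
    push_cast
    norm_num
  rw [hsign] at hperm
  have hM2det : M2.det = (-1:ℚ)^(n+2) := by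
    rcases Nat.even_or_odd (n+2) with h | h
    · simp [h.neg_one_pow] at hperm ⊢; linarith
    · simp [h.neg_one_pow] at hperm ⊢; linarith
  rw [hM2det, pow_succ]
  ring
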